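/- Let N ≥ 2 and let a, c be integers with gcd-condition coming from a row of an SL₂(ℤ) matrix. Define B₂(x) = x² - x + 1/6 and ⟨x⟩ the fractional part. If 6N·B₂(⟨a/N⟩) + 12N·B₂(⟨c/N⟩) = 6N·B₂(1/N) + 12N·B₂(0), then c ≡ 0 (mod N) and a ≡ ±1 (mod N). -/

import Mathlib

/-- The second Bernoulli polynomial. -/
noncomputable def B2 (x : ℚ) : ℚ := x ^ 2 - x + 1 / 6

lemma fract_div_nat (N : ℕ) (hN : 0 < N) (a : ℤ) :
    Int.fract ((a : ℚ) / N) = ((a % (N : ℤ) : ℤ) : ℚ) / N := by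
  have hN0 : (N : ℚ) ≠ 0 := Nat.cast_ne_zero.mpr hN.ne'
  have hNQ : (0 : ℚ) < N := by exact_mod_cast hN
  have hd : (a : ℚ) / N = ((a / (N : ℤ) : ℤ) : ℚ) + ((a % (N : ℤ) : ℤ) : ℚ) / N := by
    field_simp
    norm_cast
    linear_combination - Int.mul_ediv_add_emod a (N : ℤ)
  have h1 : (0 : ℚ) ≤ ((a % (N : ℤ) : ℤ) : ℚ) / N := by
    apply div_nonneg _ hNQ.le
    exact_mod_cast Int.emod_nonneg a (by exact_mod_cast hN.ne')
  have h2 : ((a % (N : ℤ) : ℤ) : ℚ) / N < 1 := by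
    rw [div_lt_one hNQ]
    exact_mod_cast Int.emod_lt_of_pos a (by exact_mod_cast hN)
  rw [hd, Int.fract_intCast_add, Int.fract_eq_self.mpr ⟨h1, h2⟩]

theorem stmt_11 (N : ℕ) (hN : 2 ≤ N) (a c : ℤ) (hac : IsCoprime a c)
    (h : 6 * N * B2 (Int.fract ((a : ℚ) / N)) + 12 * N * B2 (Int.fract ((c : ℚ) / N)) =
         6 * N * B2 (1 / N) + 12 * N * B2 0) :
    c ≡ 0 [ZMOD (N : ℤ)] ∧ (a ≡ 1 [ZMOD (N : ℤ)] ∨ a ≡ -1 [ZMOD (N : ℤ)]) := by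
  have hN0 : 0 < N := by omega
  have hN0Q : (N : ℚ) ≠ 0 := Nat.cast_ne_zero.mpr hN0.ne'
  rw [fract_div_nat N hN0 a, fract_div_nat N hN0 c] at h
  simp only [B2] at h
  obtain ⟨X, hXd⟩ : ∃ X, a % (N : ℤ) = X := ⟨_, rfl⟩
  obtain ⟨Y, hYd⟩ : ∃ Y, c % (N : ℤ) = Y := ⟨_, rfl⟩
  rw [hXd, hYd] at h
  have hq : (X : ℚ) * (N - X) + 2 * Y * (N - Y) = N - 1 := by
    have h5 : (1296 : ℚ) * (N : ℚ) ^ 5 ≠ 0 := by positivity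
    field_simp at h
    apply mul_left_cancel₀ h5
    linear_combination (-36 * (N : ℚ) ^ 5) * h
  have hz : X * ((N : ℤ) - X) + 2 * Y * ((N : ℤ) - Y) = (N : ℤ) - 1 := by
    exact_mod_cast hq
  have hX0 : 0 ≤ X := hXd ▸ Int.emod_nonneg a (by exact_mod_cast hN0.ne')
  have hX1 : X < N := hXd ▸ Int.emod_lt_of_pos a (by exact_mod_cast hN0)
  have hY0 : 0 ≤ Y := hYd ▸ Int.emod_nonneg c (by exact_mod_cast hN0.ne')
  have hY1 : Y < N := hYd ▸ Int.emod_lt_of_pos c (by exact_mod_cast hN0)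
  have hNZ : (2 : ℤ) ≤ N := by exact_mod_cast hN
  have hYz : Y = 0 := by
    by_contra hy
    have h1 : 1 ≤ Y := by omega
    nlinarith [mul_nonneg hX0 (by omega : (0:ℤ) ≤ (N:ℤ) - X),
      mul_nonneg (by omega : (0:ℤ) ≤ Y - 1) (by omega : (0:ℤ) ≤ (N:ℤ) - 1 - Y)]
  have hfac : (X - 1) * ((N : ℤ) - 1 - X) = 0 := by
    rw [hYz] at hz
    linear_combination hz
  have hXc : X = 1 ∨ X = (N : ℤ) - 1 := by
    rcases mul_eq_zero.mp hfac with h' | h'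
    · left; omega
    · right; omega
  refine ⟨?_, ?_⟩
  · show c % (N : ℤ) = 0 % (N : ℤ)
    rw [hYd, hYz, Int.zero_emod]
  · rcases hXc with h' | h'
    · left
      show a % (N : ℤ) = 1 % (N : ℤ)
      rw [hXd, h', Int.emod_eq_of_lt (by norm_num) (by omega)]
    · right
      show a % (N : ℤ) = (-1) % (N : ℤ)
      rw [hXd, h', show (-1 : ℤ) = ((N : ℤ) - 1) + N * (-1) by ring,
        Int.add_mul_emod_self_left, Int.emod_eq_of_lt (by omega) (by omega)]
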